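/- The degree-zero Hopf–Hochschild cohomology of a $B$-module algebra $A$ with coefficients in a $B$-equivariant $A$-bimodule $V$ is $HH^0_{Hopf}(A,V) \cong ({}^BV)^{\mathrm{Lie}(A)} = \{v \in V : b(v)=\varepsilon(b)v \text{ for all } b\in B, \text{ and } av=va \text{ for all } a\in A\}$. -/

import Mathlib

open TensorProduct MulOpposite

noncomputable section

universe u
variable (k : Type u) [Field k]
variable (B A : Type u) [Ring B] [Bialgebra k B]
  [Ring A] [Algebra k A] [Module B A] [IsScalarTower k B A] [SMulCommClass B k A]

def IsModuleAlgebra : Prop :=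
  (∀ (b : B) (a₁ a₂ : A) (n : ℕ) (x y : Fin n → B),
      Coalgebra.comul (R := k) b = ∑ i, x i ⊗ₜ[k] y i →
      b • (a₁ * a₂) = ∑ i, (x i • a₁) * (y i • a₂)) ∧
  ∀ b : B, b • (1 : A) = Coalgebra.counit (R := k) b • (1 : A)

/-- Tensor powers of `A`: `Tpow n = A^{⊗(n+1)}`; the bar complex is `CB n = Tpow (n+1)`. -/
def Tpow : ℕ → ModuleCat k
  | 0 => ModuleCat.of k A
  | n+1 => ModuleCat.of k (A ⊗[k] (Tpow n))

/-- The bar face maps `∂ⱼ` (multiplication of adjacent factors) on `Tpow (n+1)`. -/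
def barFace : (n : ℕ) → ℕ → (↥(Tpow k A (n+1)) →ₗ[k] ↥(Tpow k A n))
  | 0, _ => TensorProduct.lift (Algebra.lsmul k (A := A) k A).toLinearMap
  | n+1, 0 => (TensorProduct.map (LinearMap.mul' k A) LinearMap.id) ∘ₗ
      (TensorProduct.assoc k A A ↥(Tpow k A n)).symm.toLinearMap
  | n+1, j+1 => LinearMap.lTensor A (barFace n j)

/-- Bar differential `d : CB_{n+1} = Tpow (n+2) → CB_n = Tpow (n+1)`. -/
def dCB (n : ℕ) : ↥(Tpow k A (n+2)) →ₗ[k] ↥(Tpow k A (n+1)) :=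
  ∑ j ∈ Finset.range (n+2), ((-1 : k)^j) • barFace k A (n+1) j

/-- Left `A`-action (multiplication on the first factor). -/
def lmulFirst (n : ℕ) : A →ₗ[k] ↥(Tpow k A (n+1)) →ₗ[k] ↥(Tpow k A (n+1)) :=
  (LinearMap.rTensorHom ↥(Tpow k A n)) ∘ₗ (Algebra.lsmul k (A := A) k A).toLinearMap

/-- Right `A`-action (multiplication on the last factor). -/
def rmulLast : (n : ℕ) → Aᵐᵒᵖ →ₗ[k] ↥(Tpow k A n) →ₗ[k] ↥(Tpow k A n)
  | 0 => (Algebra.lsmul k (A := Aᵐᵒᵖ) k A).toLinearMap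
  | n+1 => (LinearMap.lTensorHom A) ∘ₗ (rmulLast n)

/-- Diagonal `B`-action on `Tpow n`. -/
def LmapBar : (n : ℕ) → B →ₗ[k] ↥(Tpow k A n) →ₗ[k] ↥(Tpow k A n)
  | 0 => (Algebra.lsmul k (A := B) k A).toLinearMap
  | n+1 => (TensorProduct.lift
      ((((TensorProduct.mapBilinear (RingHom.id k) A ↥(Tpow k A n) A ↥(Tpow k A n)).comp
        ((Algebra.lsmul k (A := B) k A).toLinearMap)).compl₂ (LmapBar n)))) ∘ₗ
      (Coalgebra.comul (R := k) (A := B))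


def crossAct (n : ℕ) (a a' : A) (b : B) (ξ : ↥(Tpow k A (n+1))) : ↥(Tpow k A (n+1)) :=
  lmulFirst k A n a (rmulLast k A (n+1) (op a') (LmapBar k B A (n+1) b ξ))

variable (V : Type u) [AddCommGroup V] [Module k V]
  [Module A V] [IsScalarTower k A V] [SMulCommClass A k V]
  [Module Aᵐᵒᵖ V] [IsScalarTower k Aᵐᵒᵖ V] [SMulCommClass Aᵐᵒᵖ k V]
  [Module B V] [IsScalarTower k B V] [SMulCommClass B k V]

def IsEquivariantBimodule : Prop :=
  ∀ (b : B) (a : A) (v : V) (n : ℕ) (x y : Fin n → B),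
      Coalgebra.comul (R := k) b = ∑ i, x i ⊗ₜ[k] y i →
      b • (a • v) = (∑ i, (x i • a) • ((y i) • v)) ∧
      b • (op a • v) = ∑ i, op (y i • a) • ((x i) • v)

/-- Generators `a₀ ⊗ ⋯ ⊗ aₙ` of `Tpow n = A^{⊗(n+1)}`. -/
def genBar : (n : ℕ) → (Fin (n+1) → A) → ↥(Tpow k A n)
  | 0, a => a 0
  | n+1, a => (a 0 ⊗ₜ[k] genBar n (fun i => a i.succ) : A ⊗[k] ↥(Tpow k A n))

/-- `f ∈ Hom_{Aᵉ⋊B}(CB_n(A), V)`. -/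
def IsCrossedHom (n : ℕ) (f : ↥(Tpow k A (n+1)) →ₗ[k] V) : Prop :=
  ∀ (a a' : A) (b : B) (ξ : ↥(Tpow k A (n+1))),
    f (crossAct k B A n a a' b ξ) = a • (op a' • (b • f ξ))

/-! ### Auxiliary lemmas -/

lemma aux_comul_rep (b : B) : ∃ (n : ℕ) (x y : Fin n → B),
    Coalgebra.comul (R := k) b = ∑ i, x i ⊗ₜ[k] y i := by
  obtain ⟨S, hS⟩ := TensorProduct.exists_finset (Coalgebra.comul (R := k) b)
  refine ⟨S.card, fun i => ((S.equivFin.symm i : S) : B × B).1,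
    fun i => ((S.equivFin.symm i : S) : B × B).2, ?_⟩
  rw [hS, ← Finset.sum_coe_sort S (fun p => p.1 ⊗ₜ[k] p.2)]
  exact (Equiv.sum_comp S.equivFin.symm
    (fun p : S => (p : B × B).1 ⊗ₜ[k] (p : B × B).2)).symm

lemma aux_counit_right (b : B) {n : ℕ} (x y : Fin n → B)
    (hb : Coalgebra.comul (R := k) b = ∑ i, x i ⊗ₜ[k] y i) :
    ∑ i, (Coalgebra.counit (R := k) (y i)) • x i = b := by
  have h := Coalgebra.lTensor_counit_comul (R := k) b
  rw [hb, map_sum] at h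
  have h2 := congrArg (TensorProduct.rid k B) h
  simpa [LinearMap.lTensor_tmul, TensorProduct.rid_tmul, map_sum] using h2

lemma aux_counit_left (b : B) {n : ℕ} (x y : Fin n → B)
    (hb : Coalgebra.comul (R := k) b = ∑ i, x i ⊗ₜ[k] y i) :
    ∑ i, (Coalgebra.counit (R := k) (x i)) • y i = b := by
  have h := Coalgebra.rTensor_counit_comul (R := k) b
  rw [hb, map_sum] at h
  have h2 := congrArg (TensorProduct.lid k B) h
  simpa [LinearMap.rTensor_tmul, TensorProduct.lid_tmul, map_sum] using h2

lemma aux_counit_mul (b : B) {n : ℕ} (x y : Fin n → B)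
    (hb : Coalgebra.comul (R := k) b = ∑ i, x i ⊗ₜ[k] y i) :
    ∑ i, (Coalgebra.counit (R := k) (x i)) * (Coalgebra.counit (R := k) (y i))
      = Coalgebra.counit (R := k) b := by
  have h := congrArg (Coalgebra.counit (R := k)) (aux_counit_left k B b x y hb)
  rw [map_sum] at h
  simpa [smul_eq_mul] using h

lemma aux_one_rep : Coalgebra.comul (R := k) (1 : B)
    = ∑ _i : Fin 1, (1 : B) ⊗ₜ[k] (1 : B) := by
  simp [Algebra.TensorProduct.one_def]

/-- `barFace 0` is multiplication. -/
lemma aux_barFace0 (x y : A) (j : ℕ) :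
    barFace k A 0 j ((x ⊗ₜ[k] y : A ⊗[k] A) : ↥(Tpow k A 1)) = x * y := by
  show TensorProduct.lift _ (x ⊗ₜ[k] y) = x * y
  erw [TensorProduct.lift.tmul]
  rfl

lemma aux_lmulFirst (a x y : A) :
    lmulFirst k A 0 a (x ⊗ₜ[k] y : A ⊗[k] A) = (a * x) ⊗ₜ[k] y := rfl

lemma aux_rmulLast (a x y : A) :
    rmulLast k A 1 (op a) (x ⊗ₜ[k] y : A ⊗[k] A) = x ⊗ₜ[k] (y * a) := by
  show LinearMap.lTensor A (rmulLast k A 0 (op a)) (x ⊗ₜ[k] y) = _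
  erw [LinearMap.lTensor_tmul]
  rfl

lemma aux_LmapBar1 (b : B) (x y : A) {n : ℕ} (bx by' : Fin n → B)
    (hb : Coalgebra.comul (R := k) b = ∑ i, bx i ⊗ₜ[k] by' i) :
    LmapBar k B A 1 b (x ⊗ₜ[k] y : A ⊗[k] A) = (∑ i, (bx i • x) ⊗ₜ[k] (by' i • y) : A ⊗[k] A) := by
  simp only [LmapBar, LinearMap.comp_apply, hb, map_sum, TensorProduct.lift.tmul,
    LinearMap.sum_apply]
  erw [LinearMap.sum_apply]
  rfl

lemma aux_crossAct (a a' : A) (b : B) (x y : A) {n : ℕ} (bx by' : Fin n → B)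
    (hb : Coalgebra.comul (R := k) b = ∑ i, bx i ⊗ₜ[k] by' i) :
    crossAct k B A 0 a a' b (x ⊗ₜ[k] y : A ⊗[k] A)
      = (∑ i, (a * (bx i • x)) ⊗ₜ[k] ((by' i • y) * a') : A ⊗[k] A) := by
  unfold crossAct
  erw [aux_LmapBar1 k B A b x y bx by' hb, map_sum, map_sum]
  refine Finset.sum_congr rfl fun i _ => ?_
  rw [aux_rmulLast, aux_lmulFirst]

lemma aux_dCB0 (x y z : A) :
    dCB k A 0 (x ⊗ₜ[k] (y ⊗ₜ[k] z) : A ⊗[k] (A ⊗[k] A)) =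
      ((x * y) ⊗ₜ[k] z : A ⊗[k] A) - x ⊗ₜ[k] (y * z) := by
  show (∑ j ∈ Finset.range 2, ((-1:k)^j) • barFace k A 1 j) _ = _
  rw [Finset.sum_range_succ, Finset.sum_range_one]
  simp only [LinearMap.add_apply, LinearMap.smul_apply, pow_zero, pow_one, one_smul,
    neg_one_smul, LinearMap.neg_apply]
  have h0 : barFace k A 1 0 (x ⊗ₜ[k] (y ⊗ₜ[k] z) : A ⊗[k] (A ⊗[k] A)) = (x * y) ⊗ₜ[k] z := by
    show (TensorProduct.map (LinearMap.mul' k A) LinearMap.id ∘ₗ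
      (TensorProduct.assoc k A A A).symm.toLinearMap) (x ⊗ₜ[k] (y ⊗ₜ[k] z)) = _
    simp
  have h1 : barFace k A 1 1 (x ⊗ₜ[k] (y ⊗ₜ[k] z) : A ⊗[k] (A ⊗[k] A)) = x ⊗ₜ[k] (y * z) := by
    show LinearMap.lTensor A (barFace k A 0 0) (x ⊗ₜ[k] (y ⊗ₜ[k] z)) = _
    erw [LinearMap.lTensor_tmul]
    exact congrArg (x ⊗ₜ[k] ·) (aux_barFace0 k A y z 0)
  show barFace k A 1 0 (x ⊗ₜ[k] (y ⊗ₜ[k] z)) + -barFace k A 1 1 (x ⊗ₜ[k] (y ⊗ₜ[k] z)) = _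
  erw [h0, h1, ← sub_eq_add_neg]
  rfl

/-- Value of a crossed hom on a pure tensor. -/
lemma aux_crossed_val (f : ↥(Tpow k A 1) →ₗ[k] V)
    (hf : IsCrossedHom k B A V 0 f) (x y : A) :
    f (x ⊗ₜ[k] y : A ⊗[k] A) = x • (op y • f ((1:A) ⊗ₜ[k] (1:A) : A ⊗[k] A)) := by
  have h := hf x y 1 ((1:A) ⊗ₜ[k] (1:A) : A ⊗[k] A)
  rw [aux_crossAct k B A x y 1 1 1 (fun _ : Fin 1 => (1:B)) (fun _ => (1:B))
    (aux_one_rep k B)] at h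
  simpa using h

section Vlemmas

variable {k B A V}

lemma aux_B_smul (hV : IsEquivariantBimodule k B A V) {v : V}
    (h1 : ∀ b : B, b • v = Coalgebra.counit (R := k) b • v) (b : B) (c : A) :
    b • (c • v) = (b • c) • v := by
  obtain ⟨n, x, y, hb⟩ := aux_comul_rep k B b
  rw [(hV b c v n x y hb).1]
  calc ∑ i, (x i • c) • (y i • v)
      = ∑ i, ((Coalgebra.counit (R := k) (y i) • x i) • c) • v := by
        refine Finset.sum_congr rfl fun i _ => ?_
        rw [h1 (y i)]
        calc (x i • c) • (Coalgebra.counit (R := k) (y i) • v)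
            = Coalgebra.counit (R := k) (y i) • ((x i • c) • v) := smul_comm _ _ _
          _ = (Coalgebra.counit (R := k) (y i) • (x i • c)) • v := (smul_assoc _ _ _).symm
          _ = ((Coalgebra.counit (R := k) (y i) • x i) • c) • v := by
              rw [smul_assoc (Coalgebra.counit (R := k) (y i)) (x i) c]
    _ = ((∑ i, Coalgebra.counit (R := k) (y i) • x i) • c) • v := by
        rw [← Finset.sum_smul, ← Finset.sum_smul]
    _ = (b • c) • v := by rw [aux_counit_right k B b x y hb]

lemma aux_center {v : V} (h2 : ∀ a : A, a • v = op a • v) (a c : A) :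
    op a • (c • v) = (c * a) • v := by
  rw [h2 c, ← mul_smul, ← MulOpposite.op_mul, ← h2]

end Vlemmas

/-- The map `c ↦ c • v`. -/
def auxφ (v : V) : A →ₗ[k] V where
  toFun := fun c => c • v
  map_add' := fun a b => add_smul a b v
  map_smul' := fun r a => smul_assoc r a v

/-- `HH⁰_{Hopf}(A,V) ≅ (ᴮV)^{Lie(A)}`: the kernel of the first differential of
`Hom_{Aᵉ⋊B}(CB_*(A),V)` is in bijection, via `f ↦ f(1⊗1)`, with
`{v ∈ V | b•v = ε(b)v for all b, and av = va for all a}`. -/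
theorem hopfHochschild_H0 (hA : IsModuleAlgebra k B A)
    (hV : IsEquivariantBimodule k B A V) :
    Set.BijOn (fun f : ↥(Tpow k A 1) →ₗ[k] V => f (genBar k A 1 (fun _ => 1)))
      {f | IsCrossedHom k B A V 0 f ∧ f ∘ₗ dCB k A 0 = 0}
      {v : V | (∀ b : B, b • v = Coalgebra.counit (R := k) b • v) ∧
               (∀ a : A, a • v = op a • v)} := by
  have hgen : genBar k A 1 (fun _ => 1) = ((1:A) ⊗ₜ[k] (1:A) : A ⊗[k] A) := rfl
  refine ⟨?_, ?_, ?_⟩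
  · -- MapsTo
    rintro f ⟨hf, hd⟩
    simp only [Set.mem_setOf_eq, hgen]
    constructor
    · intro b
      obtain ⟨n, x, y, hb⟩ := aux_comul_rep k B b
      have h := hf 1 1 b ((1:A) ⊗ₜ[k] (1:A) : A ⊗[k] A)
      rw [aux_crossAct k B A 1 1 b 1 1 x y hb] at h
      simp only [op_one, one_smul] at h
      have hsum : (∑ i, ((1:A) * (x i • (1:A))) ⊗ₜ[k] ((y i • (1:A)) * 1) : A ⊗[k] A)
          = (∑ i, Coalgebra.counit (R := k) (x i) * Coalgebra.counit (R := k) (y i)) •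
              ((1:A) ⊗ₜ[k] (1:A) : A ⊗[k] A) := by
        rw [Finset.sum_smul]
        refine Finset.sum_congr rfl fun i _ => ?_
        rw [one_mul, mul_one, hA.2 (x i), hA.2 (y i)]
        simp [TensorProduct.smul_tmul', TensorProduct.tmul_smul, smul_smul, mul_comm]
      erw [hsum, map_smul, aux_counit_mul k B b x y hb] at h
      exact h.symm
    · intro a
      have e1 : f ((a ⊗ₜ[k] (1:A) : A ⊗[k] A)) = a • f ((1:A) ⊗ₜ[k] (1:A) : A ⊗[k] A) := by
        rw [aux_crossed_val k B A V f hf a 1]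
        simp
      have e2 : f (((1:A) ⊗ₜ[k] a : A ⊗[k] A)) = op a • f ((1:A) ⊗ₜ[k] (1:A) : A ⊗[k] A) := by
        rw [aux_crossed_val k B A V f hf 1 a]
        simp
      have hd' := congrArg
        (fun g : ↥(Tpow k A 2) →ₗ[k] V =>
          g ((1:A) ⊗ₜ[k] (a ⊗ₜ[k] (1:A)) : A ⊗[k] (A ⊗[k] A))) hd
      beta_reduce at hd'
      erw [LinearMap.comp_apply, LinearMap.zero_apply] at hd'
      erw [aux_dCB0, map_sub, one_mul, mul_one, sub_eq_zero, e1, e2] at hd'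
      exact hd'
  · -- InjOn
    rintro f ⟨hf, -⟩ g ⟨hg, -⟩ hfg
    simp only [hgen] at hfg
    suffices h : ∀ ξ : A ⊗[k] A, f ξ = g ξ by exact LinearMap.ext h
    intro ξ
    induction ξ using TensorProduct.induction_on with
    | zero => erw [map_zero, map_zero]
    | tmul x y =>
        rw [aux_crossed_val k B A V f hf x y, aux_crossed_val k B A V g hg x y, hfg]
    | add p q hp hq => erw [map_add, map_add, hp, hq]
  · -- SurjOn
    rintro v ⟨h1, h2⟩
    have hφ : ∀ x y : A, (auxφ k A V v ∘ₗ barFace k A 0 0) ((x ⊗ₜ[k] y : A ⊗[k] A))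
        = (x * y) • v := by
      intro x y
      exact congrArg (auxφ k A V v) (aux_barFace0 k A x y 0)
    refine ⟨auxφ k A V v ∘ₗ barFace k A 0 0, ⟨?_, ?_⟩, ?_⟩
    · -- crossed hom
      intro a a' b ξ
      obtain ⟨n, x, y, hb⟩ := aux_comul_rep k B b
      revert ξ
      show ∀ ξ : A ⊗[k] A, (auxφ k A V v ∘ₗ barFace k A 0 0) (crossAct k B A 0 a a' b ξ)
        = a • (op a' • (b • (auxφ k A V v ∘ₗ barFace k A 0 0) ξ))
      intro ξ
      induction ξ using TensorProduct.induction_on with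
      | zero =>
          simp only [crossAct]
          repeat erw [map_zero]
          simp
      | tmul p q =>
          erw [aux_crossAct k B A a a' b p q x y hb, map_sum, hφ p q,
            aux_B_smul hV h1 b (p * q), hA.1 b p q n x y hb,
            aux_center h2 a', ← mul_smul, Finset.sum_mul, Finset.mul_sum, Finset.sum_smul]
          refine Finset.sum_congr rfl fun i _ => ?_
          erw [hφ]
          congr 1
          simp [mul_assoc]
      | add p q hp hq =>
          have hadd : crossAct k B A 0 a a' b (p + q)
              = crossAct k B A 0 a a' b p + crossAct k B A 0 a a' b q := by
            simp only [crossAct]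
            erw [map_add, map_add, map_add]
          erw [hadd, map_add, hp, hq, map_add]
          simp [smul_add]
    · -- cocycle
      apply LinearMap.ext
      show ∀ ξ : A ⊗[k] (A ⊗[k] A),
        (auxφ k A V v ∘ₗ barFace k A 0 0) (dCB k A 0 ξ) = 0
      intro ξ
      induction ξ using TensorProduct.induction_on with
      | zero => erw [map_zero]
      | tmul p w =>
          induction w using TensorProduct.induction_on with
          | zero => rw [TensorProduct.tmul_zero]; erw [map_zero]
          | tmul q r =>
              erw [aux_dCB0, map_sub, hφ, hφ, mul_assoc, sub_self]
          | add w1 w2 hw1 hw2 =>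
              erw [TensorProduct.tmul_add, map_add (dCB k A 0), map_add, hw1, hw2, add_zero]
      | add ξ1 ξ2 hξ1 hξ2 => erw [map_add (dCB k A 0), map_add, hξ1, hξ2, add_zero]
    · -- value at 1 ⊗ 1
      show (auxφ k A V v ∘ₗ barFace k A 0 0) (genBar k A 1 fun _ => 1) = v
      rw [hgen, hφ 1 1, one_mul, one_smul]

end
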